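/- If R has only trivial idempotents, then for every positive integer n the ring V_n(R) of upper triangular n×n Toeplitz matrices over R is i-reversible. -/

import Mathlib

/-- A ring is *i-reversible* if whenever `a * b` is a non-zero idempotent, `b * a` is an
idempotent. -/
def IsIReversible (S : Type*) [Ring S] : Prop :=
  ∀ a b : S, IsIdempotentElem (a * b) → a * b ≠ 0 → IsIdempotentElem (b * a)

/-- A ring is *reversible* if `a * b = 0` implies `b * a = 0`. -/
def IsReversible (S : Type*) [Ring S] : Prop :=
  ∀ a b : S, a * b = 0 → b * a = 0

/-- A ring has only trivial idempotents if its only idempotents are `0` and `1`. -/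
def HasOnlyTrivialIdempotents (S : Type*) [Ring S] : Prop :=
  ∀ e : S, IsIdempotentElem e → e = 0 ∨ e = 1

/-- Upper triangular predicate for square matrices. -/
def Matrix.IsUpperTri {n : ℕ} {R : Type*} [Zero R] (A : Matrix (Fin n) (Fin n) R) : Prop :=
  ∀ ⦃i j : Fin n⦄, j < i → A i j = 0

lemma Matrix.IsUpperTri.mul {n : ℕ} {R : Type*} [Ring R]
    {A B : Matrix (Fin n) (Fin n) R} (hA : A.IsUpperTri) (hB : B.IsUpperTri) :
    (A * B).IsUpperTri := by
  intro i j h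
  rw [Matrix.mul_apply]
  refine Finset.sum_eq_zero fun k _ => ?_
  rcases lt_or_ge k i with hk | hk
  · rw [hA hk, zero_mul]
  · rw [hB (lt_of_lt_of_le h hk), mul_zero]

/-- The ring `T_n(R)` of upper triangular `n × n` matrices, as a subring of the matrix ring. -/
def triangularRing (n : ℕ) (R : Type*) [Ring R] :
    Subring (Matrix (Fin n) (Fin n) R) where
  carrier := {A | A.IsUpperTri}
  mul_mem' ha hb := ha.mul hb
  one_mem' := fun i j h => by simp [Matrix.one_apply, (ne_of_lt h).symm]
  add_mem' ha hb := fun i j h => by simp [Matrix.add_apply, ha h, hb h]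
  zero_mem' := fun i j h => rfl
  neg_mem' ha := fun i j h => by simp [ha h]

lemma diag_mul_upperTri {n : ℕ} {R : Type*} [Ring R]
    {A B : Matrix (Fin n) (Fin n) R} (hA : A.IsUpperTri)
    (hB : B.IsUpperTri) (i : Fin n) : (A * B) i i = A i i * B i i := by
  rw [Matrix.mul_apply]
  refine Finset.sum_eq_single i (fun k _ hk => ?_) (by simp)
  rcases lt_or_gt_of_ne hk with h | h
  · rw [hA h, zero_mul]
  · rw [hB h, mul_zero]

/-- The ring `D_n(R)` of upper triangular `n × n` matrices with constant diagonal. -/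
def constDiagRing (n : ℕ) (R : Type*) [Ring R] :
    Subring (Matrix (Fin n) (Fin n) R) where
  carrier := {A | A.IsUpperTri ∧ ∀ i j : Fin n, A i i = A j j}
  mul_mem' := by
    rintro A B ⟨hA, hA'⟩ ⟨hB, hB'⟩
    refine ⟨hA.mul hB, fun i j => ?_⟩
    rw [diag_mul_upperTri hA hB, diag_mul_upperTri hA hB, hA' i j, hB' i j]
  one_mem' := ⟨fun i j h => by simp [Matrix.one_apply, (ne_of_lt h).symm], by simp⟩
  add_mem' := by
    rintro A B ⟨hA, hA'⟩ ⟨hB, hB'⟩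
    exact ⟨fun i j h => by simp [Matrix.add_apply, hA h, hB h],
      fun i j => by simp [Matrix.add_apply, hA' i j, hB' i j]⟩
  zero_mem' := ⟨fun i j h => rfl, by simp⟩
  neg_mem' := by
    rintro A ⟨hA, hA'⟩
    exact ⟨fun i j h => by simp [hA h], fun i j => by simp [hA' i j]⟩

/-- The ring `V_n(R)` of upper triangular Toeplitz `n × n` matrices. -/
def toeplitzRing (n : ℕ) (R : Type*) [Ring R] :
    Subring (Matrix (Fin n) (Fin n) R) where
  carrier := {A | A.IsUpperTri ∧ ∀ (i j : Fin n) (hi : (i : ℕ) + 1 < n) (hj : (j : ℕ) + 1 < n),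
    A i j = A ⟨i + 1, hi⟩ ⟨j + 1, hj⟩}
  mul_mem' := by
    rintro A B ⟨hA, hA'⟩ ⟨hB, hB'⟩
    refine ⟨hA.mul hB, ?_⟩
    intro i j hi hj
    have key : ∀ (p q : Fin n), (A * B) p q = ∑ k ∈ Finset.Icc p q, A p k * B k q := by
      intro p q
      rw [Matrix.mul_apply]
      symm
      apply Finset.sum_subset (Finset.subset_univ _)
      intro k _ hk
      rw [Finset.mem_Icc, not_and_or] at hk
      rcases hk with h | h
      · rw [hA (lt_of_not_ge h), zero_mul]
      · rw [hB (lt_of_not_ge h), mul_zero]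
    rw [key, key]
    refine Finset.sum_bij'
      (fun k hk => (⟨(k : ℕ) + 1,
        Nat.lt_of_le_of_lt (Nat.succ_le_succ (Finset.mem_Icc.mp hk).2) hj⟩ : Fin n))
      (fun k hk => (⟨(k : ℕ) - 1, lt_of_le_of_lt (Nat.sub_le _ _) k.isLt⟩ : Fin n))
      ?_ ?_ ?_ ?_ ?_
    · intro k hk
      rw [Finset.mem_Icc] at hk ⊢
      exact ⟨Nat.succ_le_succ hk.1, Nat.succ_le_succ hk.2⟩
    · intro k hk
      rw [Finset.mem_Icc] at hk ⊢
      have h1 : (i : ℕ) + 1 ≤ (k : ℕ) := hk.1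
      have h2 : (k : ℕ) ≤ (j : ℕ) + 1 := hk.2
      constructor
      · exact Fin.mk_le_mk.mpr (Nat.le_sub_of_add_le h1)
      · exact Fin.mk_le_mk.mpr (Nat.sub_le_of_le_add h2)
    · intro k hk
      apply Fin.ext
      simp
    · intro k hk
      apply Fin.ext
      have h1 : 1 ≤ (k : ℕ) :=
        le_trans (Nat.succ_le_succ (Nat.zero_le _)) (Finset.mem_Icc.mp hk).1
      simp [Nat.sub_add_cancel h1]
    · intro k hk
      rw [hA' i k hi (Nat.lt_of_le_of_lt (Nat.succ_le_succ (Finset.mem_Icc.mp hk).2) hj),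
        hB' k j (Nat.lt_of_le_of_lt (Nat.succ_le_succ (Finset.mem_Icc.mp hk).2) hj) hj]
  one_mem' := ⟨fun i j h => by simp [Matrix.one_apply, (ne_of_lt h).symm],
    fun i j hi hj => by simp [Matrix.one_apply, Fin.ext_iff]⟩
  add_mem' := by
    rintro A B ⟨hA, hA'⟩ ⟨hB, hB'⟩
    exact ⟨fun i j h => by simp [Matrix.add_apply, hA h, hB h],
      fun i j hi hj => by simp [Matrix.add_apply, hA' i j hi hj, hB' i j hi hj]⟩
  zero_mem' := ⟨fun i j h => rfl, fun i j hi hj => rfl⟩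
  neg_mem' := by
    rintro A ⟨hA, hA'⟩
    exact ⟨fun i j h => by simp [hA h], fun i j hi hj => by simp [hA' i j hi hj]⟩

lemma strictUpper_pow_apply {n : ℕ} {R : Type*} [Ring R] {Z : Matrix (Fin n) (Fin n) R}
    (hZ : ∀ i j : Fin n, (j : ℕ) ≤ i → Z i j = 0) :
    ∀ (k : ℕ) (i j : Fin n), (j : ℕ) < i + k → (Z ^ k) i j = 0 := by
  intro k
  induction k with
  | zero =>
    intro i j hj
    simp only [Nat.add_zero] at hj
    simp [pow_zero, Matrix.one_apply, (Fin.ne_of_lt hj).symm, Fin.lt_def]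
  | succ k ih =>
    intro i j hj
    rw [pow_succ, Matrix.mul_apply]
    refine Finset.sum_eq_zero fun m _ => ?_
    rcases lt_or_ge (m : ℕ) ((i : ℕ) + k) with hm | hm
    · rw [ih i m hm, zero_mul]
    · rw [hZ m j (by omega), mul_zero]

lemma strictUpper_pow_eq_zero {n : ℕ} {R : Type*} [Ring R] {Z : Matrix (Fin n) (Fin n) R}
    (hZ : ∀ i j : Fin n, (j : ℕ) ≤ i → Z i j = 0) : Z ^ n = 0 := by
  ext i j
  rw [strictUpper_pow_apply hZ n i j (by omega)]
  rfl

lemma neg_sq_nilpotent_eq_zero {S : Type*} [Ring S] {Z : S} (hsq : Z ^ 2 = -Z) :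
    ∀ m : ℕ, Z ^ (m + 1) = 0 → Z = 0 := by
  intro m
  induction m with
  | zero => intro h0; simpa using h0
  | succ m ih =>
    intro h0
    apply ih
    have : Z ^ (m + 2) = -Z ^ (m + 1) := by
      rw [show m + 2 = m + 1 + 1 by ring, pow_succ]
      calc Z ^ (m + 1) * Z = Z ^ m * (Z * Z) := by rw [pow_succ, mul_assoc]
        _ = Z ^ m * (-Z) := by rw [← sq, hsq]
        _ = -(Z ^ m * Z) := by noncomm_ring
        _ = -Z ^ (m + 1) := by rw [pow_succ]
    rw [this] at h0
    exact neg_eq_zero.mp h0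

/-- If `R` has only trivial idempotents, then for every positive integer `n` the ring
`V_n(R)` of upper triangular Toeplitz matrices is i-reversible. -/
theorem toeplitzRing_isIReversible (R : Type*) [Ring R] (h : HasOnlyTrivialIdempotents R)
    (n : ℕ) (hn : 0 < n) : IsIReversible (toeplitzRing n R) := by
  intro a b hab hne
  -- Let E be the underlying matrix of a*b
  set E : Matrix (Fin n) (Fin n) R := ((a * b : toeplitzRing n R) : Matrix (Fin n) (Fin n) R)
    with hE
  obtain ⟨hUT, hT⟩ := (a * b).2
  have hEE : E * E = E := by
    have := congrArg (Subring.subtype (toeplitzRing n R)) hab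
    simpa [hE] using this
  -- the (0,0) entry is idempotent
  have h0 : IsIdempotentElem (E ⟨0, hn⟩ ⟨0, hn⟩) := by
    have := diag_mul_upperTri hUT hUT ⟨0, hn⟩
    rw [hEE] at this
    exact this.symm
  -- the diagonal of E is constant
  have hdiag : ∀ (k : ℕ) (hk : k < n), E ⟨k, hk⟩ ⟨k, hk⟩ = E ⟨0, hn⟩ ⟨0, hn⟩ := by
    intro k
    induction k with
    | zero => intro hk; rfl
    | succ k ih =>
      intro hk
      have hk' : k < n := Nat.lt_of_succ_lt hk
      rw [← ih hk']
      exact (hT ⟨k, hk'⟩ ⟨k, hk'⟩ hk hk).symm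
  rcases h _ h0 with h0 | h0
  · -- degenerate case: E is nilpotent and idempotent, hence 0, contradiction
    exfalso
    have hZ : ∀ i j : Fin n, (j : ℕ) ≤ i → E i j = 0 := by
      intro i j hij
      rcases lt_or_eq_of_le hij with hij | hij
      · exact hUT hij
      · have hji : j = i := Fin.ext hij
        subst hji
        have hd := hdiag (j : ℕ) j.isLt
        rw [Fin.eta] at hd
        rw [hd, h0]
    have hpow : ∀ k : ℕ, E ^ (k + 1) = E := by
      intro k
      induction k with
      | zero => simp
      | succ k ih => rw [pow_succ, ih, hEE]
    have hEz : E = 0 := by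
      obtain ⟨m, rfl⟩ := Nat.exists_eq_add_of_lt hn
      rw [← hpow (0 + m), strictUpper_pow_eq_zero hZ]
    exact hne (Subtype.ext hEz)
  · -- main case: E = 1, so a*b = 1
    have hZstrict : ∀ i j : Fin n, (j : ℕ) ≤ i → (E - 1) i j = 0 := by
      intro i j hij
      rw [Matrix.sub_apply]
      rcases lt_or_eq_of_le hij with hij | hij
      · have hlt : j < i := hij
        rw [show E i j = 0 from hUT hlt, Matrix.one_apply_ne (Fin.ne_of_lt hlt).symm, sub_zero]
      · have hji : j = i := Fin.ext hij
        subst hji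
        have hd := hdiag (j : ℕ) j.isLt
        rw [Fin.eta] at hd
        rw [hd, h0, Matrix.one_apply_eq, sub_self]
    have hsq : (E - 1) ^ 2 = -(E - 1) := by
      rw [sq]
      have : (E - 1) * (E - 1) = E * E - E - E + 1 := by noncomm_ring
      rw [this, hEE]; noncomm_ring
    have hZ0 : E - 1 = 0 := by
      obtain ⟨m, rfl⟩ := Nat.exists_eq_add_of_lt hn
      exact neg_sq_nilpotent_eq_zero hsq (0 + m) (strictUpper_pow_eq_zero hZstrict)
    have hE1 : a * b = 1 := Subtype.ext (by rw [← hE]; simpa [sub_eq_zero] using hZ0)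
    show b * a * (b * a) = b * a
    calc b * a * (b * a) = b * (a * b) * a := by noncomm_ring
      _ = b * a := by rw [hE1, mul_one]
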